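/- With notation as above (0 < a < b < 1, integers m, n ≥ 1, ℓ(k) = max{k' : b^k ≤ a^{k'}}, γ = log m/(−log b) + log n/(−log a)), for all integers 0 ≤ j < k one has m^{k−j} n^{ℓ(k)−ℓ(j)} < n · b^{−(k−j)γ}. -/

import Mathlib

open Real

theorem stmt_8 (m n : ℕ) (hm : 1 ≤ m) (hn : 2 ≤ n)
    (a b : ℝ) (ha : 0 < a) (hab : a < b) (hb : b < 1)
    (ℓ : ℕ → ℤ) (hℓ : ∀ k : ℕ, ℓ k = ⌊(k : ℝ) * log b / log a⌋)
    (γ : ℝ) (hγ : γ = log m / (-log b) + log n / (-log a))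
    (j k : ℕ) (hjk : j < k) :
    (m : ℝ) ^ (k - j) * (n : ℝ) ^ (ℓ k - ℓ j) <
      (n : ℝ) * b ^ (-((k : ℝ) - (j : ℝ)) * γ) := by
  have hb0 : (0:ℝ) < b := ha.trans hab
  have hla : log a < 0 := Real.log_neg ha (hab.trans hb)
  have hlb : log b < 0 := Real.log_neg hb0 hb
  have hm1 : (1:ℝ) ≤ m := by exact_mod_cast hm
  have hn1 : (1:ℝ) < n := lt_of_lt_of_le one_lt_two (by exact_mod_cast hn)
  have hn0 : (0:ℝ) < n := zero_lt_one.trans hn1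
  have hm0 : (0:ℝ) < m := zero_lt_one.trans_le hm1
  have hln : 0 < log n := Real.log_pos hn1
  have hlm : 0 ≤ log m := Real.log_nonneg hm1
  set d : ℕ := k - j with hdd
  have hd : (k:ℝ) = (j:ℝ) + (d:ℝ) := by
    have : j + d = k := Nat.add_sub_cancel' hjk.le
    exact_mod_cast this.symm
  -- positivity
  have hL : 0 < (m : ℝ) ^ d * (n : ℝ) ^ (ℓ k - ℓ j) := by positivity
  have hR : 0 < (n : ℝ) * b ^ (-((k : ℝ) - (j : ℝ)) * γ) := by positivity
  rw [← Real.log_lt_log_iff hL hR]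
  rw [Real.log_mul (by positivity) (by positivity),
      Real.log_mul (by positivity) (by positivity),
      Real.log_pow, Real.log_zpow, Real.log_rpow hb0]
  -- key floor inequality
  have t := log b / log a
  have key : ((ℓ k - ℓ j : ℤ) : ℝ) < 1 + (d : ℝ) * (log b / log a) := by
    rw [hℓ, hℓ]
    push_cast
    have h1 : (⌊(k : ℝ) * log b / log a⌋ : ℝ) ≤ (k : ℝ) * log b / log a :=
      Int.floor_le _
    have h2 : (j : ℝ) * log b / log a - 1 < (⌊(j : ℝ) * log b / log a⌋ : ℝ) :=
      Int.sub_one_lt_floor _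
    have hk : (k : ℝ) * log b / log a = (j : ℝ) * log b / log a + (d:ℝ) * (log b / log a) := by
      rw [hd]; ring
    linarith
  have hmul : ((ℓ k - ℓ j : ℤ) : ℝ) * log n < (1 + (d : ℝ) * (log b / log a)) * log n :=
    mul_lt_mul_of_pos_right key hln
  have hRHS : -((k : ℝ) - (j : ℝ)) * γ * log b
      = (d : ℝ) * log m + (d : ℝ) * (log b / log a) * log n := by
    have h1 : log b ≠ 0 := ne_of_lt hlb
    have h2 : log a ≠ 0 := ne_of_lt hla
    rw [hγ, hd]
    have e1 : log ↑m / log b * log b = log ↑m := div_mul_cancel₀ _ h1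
    linear_combination (d : ℝ) * e1
  rw [hRHS]
  nlinarith [mul_nonneg (Nat.cast_nonneg d : (0:ℝ) ≤ d) hlm]
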